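/- A linear order ≤ on S is globally homogeneous if and only if for every a < b in S, the open interval (a,b) is order-isomorphic to (S, ≤). -/

import Mathlib

open Set

/-- A linear order is globally homogeneous if every open interval of the form `(-∞,a)`,
`(a,b)` with `a < b`, or `(a,∞)` is order-isomorphic to the whole order. -/
def GloballyHomogeneousOrder (S : Type*) [LinearOrder S] : Prop :=
  ∀ a b : S,
    Nonempty (Set.Iio a ≃o S) ∧ Nonempty (Set.Ioi a ≃o S) ∧
    (a < b → Nonempty (Set.Ioo a b ≃o S))

/-- Restriction of an interval isomorphism to the initial segment below `m`. -/
noncomputable def iooToIio {S : Type*} [LinearOrder S] {b c : S} (f : Ioo b c ≃o S)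
    (m : Ioo b c) : Ioo b m.1 ≃o Iio (f m) where
  toFun x := ⟨f ⟨x.1, x.2.1, x.2.2.trans m.2.2⟩, by
    exact f.lt_iff_lt.mpr (show (⟨x.1, x.2.1, x.2.2.trans m.2.2⟩ : Ioo b c) < m from x.2.2)⟩
  invFun y := ⟨(f.symm y.1).1, (f.symm y.1).2.1, by
    have : f.symm y.1 < f.symm (f m) := f.symm.lt_iff_lt.mpr y.2
    simpa using this⟩
  left_inv x := by ext; simp
  right_inv y := by ext; simp; exact f.apply_symm_apply y.1
  map_rel_iff' {x y} := by
    simp only [Equiv.coe_fn_mk, Subtype.mk_le_mk, f.le_iff_le]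
    exact f.le_iff_le

/-- Restriction of an interval isomorphism to the final segment above `m`. -/
noncomputable def iooToIoi {S : Type*} [LinearOrder S] {b c : S} (f : Ioo b c ≃o S)
    (m : Ioo b c) : Ioo m.1 c ≃o Ioi (f m) where
  toFun x := ⟨f ⟨x.1, m.2.1.trans x.2.1, x.2.2⟩, by
    exact f.lt_iff_lt.mpr (show m < (⟨x.1, m.2.1.trans x.2.1, x.2.2⟩ : Ioo b c) from x.2.1)⟩
  invFun y := ⟨(f.symm y.1).1, by
      have : f.symm (f m) < f.symm y.1 := f.symm.lt_iff_lt.mpr y.2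
      simpa using this, (f.symm y.1).2.2⟩
  left_inv x := by ext; simp
  right_inv y := by ext; simp; exact f.apply_symm_apply y.1
  map_rel_iff' {x y} := by
    simp only [Equiv.coe_fn_mk, Subtype.mk_le_mk, f.le_iff_le]
    exact f.le_iff_le

theorem stmt_2 (S : Type*) [LinearOrder S] [Infinite S] :
    GloballyHomogeneousOrder S ↔ ∀ a b : S, a < b → Nonempty (Set.Ioo a b ≃o S) := by
  constructor
  · intro h a b hab
    exact (h a b).2.2 hab
  · intro h a b'
    obtain ⟨p, q, hne⟩ := (Infinite.instNontrivial S).exists_pair_ne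
    obtain ⟨b, c, hbc⟩ : ∃ b c : S, b < c := by
      rcases hne.lt_or_gt with h' | h'
      · exact ⟨p, q, h'⟩
      · exact ⟨q, p, h'⟩
    obtain ⟨f⟩ := h b c hbc
    set m : Ioo b c := f.symm a with hm
    have hfm : f m = a := f.apply_symm_apply a
    have e1 : Ioo b m.1 ≃o Iio a := hfm ▸ iooToIio f m
    have e2 : Ioo m.1 c ≃o Ioi a := hfm ▸ iooToIoi f m
    obtain ⟨g1⟩ := h b m.1 m.2.1
    obtain ⟨g2⟩ := h m.1 c m.2.2
    exact ⟨⟨e1.symm.trans g1⟩, ⟨e2.symm.trans g2⟩, fun hab => h a b' hab⟩
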